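/- arXiv:1803.05252 — 9 statements merged into one kernel-verified Lean document; each statement's English description precedes it below -/
import Mathlib

section
/- For every join-semilattice S there exist a type A and a function f : S → Set A such that f (x ⊔ y) = f x ∪ f y for all x, y ∈ S, and such that for all x, y ∈ S, x ≤ y if and only if f x ⊆ f y. (Every semilattice model can be atomized: elements become sets of atoms, the idempotent merge operation becomes set union, and the partial order becomes set inclusion.) -/
universe u

/-- Every join-semilattice can be atomized: there is a type `A` of atoms
and a map `f` sending each element to a set of atoms, such that the merge (join) operation
becomes set union and the partial order becomes set inclusion. -/
theorem semilattice_atomization (S : Type u) [SemilatticeSup S] :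
    ∃ (A : Type u) (f : S → Set A),
      (∀ x y : S, f (x ⊔ y) = f x ∪ f y) ∧
      (∀ x y : S, x ≤ y ↔ f x ⊆ f y) := by
  refine ⟨S, fun x => {a | ¬ x ≤ a}, ?_, ?_⟩
  · intro x y
    ext a
    simp [sup_le_iff, -not_and, not_and_or]
  · intro x y
    constructor
    · intro h a ha hya
      exact ha (h.trans hya)
    · intro h
      by_contra hxy
      exact h hxy le_rfl
end

section
/- Let f : C → Set A and g : C → Set B be atomized models over the same constants C, and define the disjoint-union model h : C → Set (A ⊕ B) by h c = Sum.inl '' (f c) ∪ Sum.inr '' (g c). Then for all terms s, t over C: h satisfies s ≤ t if and only if both f and g satisfy s ≤ t. Consequently h satisfies every positive relation satisfied by both f and g, and h satisfies every negative relation satisfied by f or by g. -/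
/-- The atom set of a term (set of constants) `t` under the atomized model `f`. -/
def atomSet {C A : Type*} (f : C → Set A) (t : Set C) : Set A := ⋃ c ∈ t, f c

/-- The atomized model `f` satisfies the positive relation `s ≤ t`. -/
def Sat {C A : Type*} (f : C → Set A) (s t : Set C) : Prop := atomSet f s ⊆ atomSet f t

/-- The disjoint-union model `h` of two atomized models `f` and `g`
satisfies a positive relation `s ≤ t` iff both `f` and `g` do; consequently `h` satisfies
every positive relation satisfied by both, and every negative relation satisfied by
either of them. -/
theorem disjoint_union_model {C A B : Type*} (f : C → Set A) (g : C → Set B)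
    (h : C → Set (A ⊕ B))
    (hdef : ∀ c, h c = Sum.inl '' f c ∪ Sum.inr '' g c) :
    ∀ s t : Set C,
      (Sat h s t ↔ Sat f s t ∧ Sat g s t) ∧
      (Sat f s t → Sat g s t → Sat h s t) ∧
      ((¬ Sat f s t ∨ ¬ Sat g s t) → ¬ Sat h s t) := by
  intro s t
  have key : Sat h s t ↔ Sat f s t ∧ Sat g s t := by
    constructor
    · intro hst
      constructor
      · intro a ha
        simp only [atomSet, Set.mem_iUnion] at ha ⊢
        obtain ⟨c, hc, hac⟩ := ha
        have : (Sum.inl a : A ⊕ B) ∈ atomSet h t := by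
          apply hst
          simp only [atomSet, Set.mem_iUnion]
          exact ⟨c, hc, by rw [hdef]; left; exact ⟨a, hac, rfl⟩⟩
        simp only [atomSet, Set.mem_iUnion] at this
        obtain ⟨c', hc', hmem⟩ := this
        rw [hdef] at hmem
        rcases hmem with ⟨a', ha', heq⟩ | ⟨b', _, heq⟩
        · exact ⟨c', hc', by rwa [Sum.inl.injEq] at heq ▸ (Sum.inl.inj heq ▸ ha')⟩
        · exact absurd heq (by simp)
      · intro b hb
        simp only [atomSet, Set.mem_iUnion] at hb ⊢
        obtain ⟨c, hc, hbc⟩ := hb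
        have : (Sum.inr b : A ⊕ B) ∈ atomSet h t := by
          apply hst
          simp only [atomSet, Set.mem_iUnion]
          exact ⟨c, hc, by rw [hdef]; right; exact ⟨b, hbc, rfl⟩⟩
        simp only [atomSet, Set.mem_iUnion] at this
        obtain ⟨c', hc', hmem⟩ := this
        rw [hdef] at hmem
        rcases hmem with ⟨a', _, heq⟩ | ⟨b', hb', heq⟩
        · exact absurd heq (by simp)
        · exact ⟨c', hc', Sum.inr.inj heq ▸ hb'⟩
    · rintro ⟨hf, hg⟩ x hx
      simp only [atomSet, Set.mem_iUnion] at hx ⊢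
      obtain ⟨c, hc, hxc⟩ := hx
      rw [hdef] at hxc
      rcases hxc with ⟨a, ha, rfl⟩ | ⟨b, hb, rfl⟩
      · have : a ∈ atomSet f t := hf (by simp only [atomSet, Set.mem_iUnion]; exact ⟨c, hc, ha⟩)
        simp only [atomSet, Set.mem_iUnion] at this
        obtain ⟨c', hc', h'⟩ := this
        exact ⟨c', hc', by rw [hdef]; left; exact ⟨a, h', rfl⟩⟩
      · have : b ∈ atomSet g t := hg (by simp only [atomSet, Set.mem_iUnion]; exact ⟨c, hc, hb⟩)
        simp only [atomSet, Set.mem_iUnion] at this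
        obtain ⟨c', hc', h'⟩ := this
        exact ⟨c', hc', by rw [hdef]; right; exact ⟨b, h', rfl⟩⟩
  refine ⟨key, fun hf hg => key.mpr ⟨hf, hg⟩, fun hor hh => ?_⟩
  rcases hor with hnf | hng
  · exact hnf (key.mp hh).1
  · exact hng (key.mp hh).2
end

section
/- Let R be a relation set over C and let p and q be positive relations (pairs of terms) over C. Assume that R together with the negative relation ¬p is satisfiable, and that every atomized model over C (with any atom type) satisfying R and ¬p satisfies q. Then every atomized model over C satisfying R satisfies q. (A positive relation entailed by a set of positive and negative relations is already entailed without the negative relation.) -/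
universe u

/-- An atomized model `f` satisfies the positive relation `r.1 ≤ r.2` between terms. -/
def SatPos {C A : Type*} (f : C → Set A) (r : Set C × Set C) : Prop :=
  (⋃ c ∈ r.1, f c) ⊆ ⋃ c ∈ r.2, f c

/-- An atomized model `f` satisfies the relation set consisting of positive relations `Rp`
and negative relations `Rn`. -/
def SatRel {C A : Type*} (f : C → Set A) (Rp Rn : Set (Set C × Set C)) : Prop :=
  (∀ r ∈ Rp, SatPos f r) ∧ (∀ r ∈ Rn, ¬ SatPos f r)

/-- If `R ∪ {¬p}` is satisfiable and every atomized model of `R ∪ {¬p}`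
satisfies the positive relation `q`, then every atomized model of `R` satisfies `q`:
a positive relation entailed with the help of a negative relation is already entailed
without it. -/
theorem positive_entailment {C : Type u} (Rp Rn : Set (Set C × Set C))
    (p q : Set C × Set C)
    (hsat : ∃ (A : Type u) (f : C → Set A), SatRel f Rp Rn ∧ ¬ SatPos f p)
    (hent : ∀ (A : Type u) (f : C → Set A), SatRel f Rp Rn → ¬ SatPos f p → SatPos f q) :
    ∀ (A : Type u) (f : C → Set A), SatRel f Rp Rn → SatPos f q := by
  obtain ⟨A, f, hf, hfp⟩ := hsat
  intro B g hg
  set h : C → Set (A ⊕ B) := fun c => Sum.inl '' f c ∪ Sum.inr '' g c with hh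
  have key : ∀ r : Set C × Set C, (¬ SatPos f r → ¬ SatPos h r) ∧
      (SatPos f r → SatPos g r → SatPos h r) ∧ (SatPos h r → SatPos g r) := by
    intro r
    refine ⟨?_, ?_, ?_⟩
    · intro hnf hhr
      apply hnf
      intro x hx
      simp only [Set.mem_iUnion] at hx ⊢
      obtain ⟨c, hc, hxc⟩ := hx
      have : (Sum.inl x : A ⊕ B) ∈ ⋃ c ∈ r.2, h c := by
        apply hhr
        simp only [Set.mem_iUnion]
        exact ⟨c, hc, Or.inl ⟨x, hxc, rfl⟩⟩
      simp only [Set.mem_iUnion, hh, Set.mem_union, Set.mem_image] at this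
      obtain ⟨c', hc', hin⟩ := this
      rcases hin with ⟨y, hy, hxy⟩ | ⟨y, hy, hxy⟩
      · cases hxy; exact ⟨c', hc', hy⟩
      · exact absurd hxy (by simp)
    · intro hfr hgr x hx
      simp only [Set.mem_iUnion, hh, Set.mem_union, Set.mem_image] at hx ⊢
      obtain ⟨c, hc, hin⟩ := hx
      rcases hin with ⟨y, hy, rfl⟩ | ⟨y, hy, rfl⟩
      · have := hfr (Set.mem_iUnion₂.mpr ⟨c, hc, hy⟩)
        obtain ⟨c', hc', hy'⟩ := Set.mem_iUnion₂.mp this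
        exact ⟨c', hc', Or.inl ⟨y, hy', rfl⟩⟩
      · have := hgr (Set.mem_iUnion₂.mpr ⟨c, hc, hy⟩)
        obtain ⟨c', hc', hy'⟩ := Set.mem_iUnion₂.mp this
        exact ⟨c', hc', Or.inr ⟨y, hy', rfl⟩⟩
    · intro hhr x hx
      obtain ⟨c, hc, hxc⟩ := Set.mem_iUnion₂.mp hx
      have : (Sum.inr x : A ⊕ B) ∈ ⋃ c ∈ r.2, h c := by
        apply hhr
        exact Set.mem_iUnion₂.mpr ⟨c, hc, Or.inr ⟨x, hxc, rfl⟩⟩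
      simp only [Set.mem_iUnion, hh, Set.mem_union, Set.mem_image] at this
      obtain ⟨c', hc', hin⟩ := this
      rcases hin with ⟨y, hy, hxy⟩ | ⟨y, hy, hxy⟩
      · exact absurd hxy (by simp)
      · cases hxy; exact Set.mem_iUnion₂.mpr ⟨c', hc', hy⟩
  have hhR : SatRel h Rp Rn := by
    constructor
    · intro r hr
      exact (key r).2.1 (hf.1 r hr) (hg.1 r hr)
    · intro r hr hhr
      exact (key r).1 (hf.2 r hr) hhr
  have hhp : ¬ SatPos h p := (key p).1 hfp
  exact (key q).2.2 (hent _ h hhR hhp)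
end

section
/- Let R be a satisfiable relation set over C. Then there exists an atomized model f over C satisfying R such that for all terms a, b over C: f satisfies a ≤ b if and only if every atomized model over C (with any atom type) satisfying all positive relations of R⁺ satisfies a ≤ b. (Existence of the freest model of R: it satisfies exactly the positive relations entailed by R⁺ alone, while still satisfying every negative relation of R⁻.) -/
universe u

/-- Existence of the freest model of a satisfiable relation set `R`:
an atomized model of `R` satisfying exactly those positive relations entailed by the
positive part `Rp` alone. -/
theorem freest_model_exists {C : Type u} (Rp Rn : Set (Set C × Set C))
    (hsat : ∃ (A : Type u) (f : C → Set A), SatRel f Rp Rn) :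
    ∃ (A : Type u) (f : C → Set A), SatRel f Rp Rn ∧
      ∀ a b : Set C,
        SatPos f (a, b) ↔
          ∀ (B : Type u) (g : C → Set B), (∀ r ∈ Rp, SatPos g r) → SatPos g (a, b) := by
  classical
  -- the freest model: atoms are Rp-closed subsets of C
  set Closed : Set C → Prop :=
    fun S => ∀ r ∈ Rp, (∃ x ∈ r.1, x ∈ S) → ∃ y ∈ r.2, y ∈ S with hClosed
  set f : C → Set (Set C) := fun c => {S | c ∈ S ∧ Closed S} with hf
  -- f satisfies all positive relations
  have hpos : ∀ r ∈ Rp, SatPos f r := by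
    intro r hr S hS
    simp only [Set.mem_iUnion] at hS ⊢
    obtain ⟨c, hc, hcS, hScl⟩ := hS
    obtain ⟨y, hy, hyS⟩ := hScl r hr ⟨c, hc, hcS⟩
    exact ⟨y, hy, hyS, hScl⟩
  -- completeness: if f satisfies (a,b), every Rp-model does
  have hcomp : ∀ a b : Set C, SatPos f (a, b) →
      ∀ (B : Type u) (g : C → Set B), (∀ r ∈ Rp, SatPos g r) → SatPos g (a, b) := by
    intro a b hfab B g hg φ hφ
    simp only [Set.mem_iUnion] at hφ ⊢
    obtain ⟨c, hc, hφc⟩ := hφ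
    -- the set of constants containing φ is Rp-closed
    have hScl : Closed {x | φ ∈ g x} := by
      intro r hr ⟨x, hx, hφx⟩
      have : φ ∈ ⋃ y ∈ r.2, g y := hg r hr (Set.mem_iUnion₂.2 ⟨x, hx, hφx⟩)
      simpa only [Set.mem_iUnion, exists_prop, Set.mem_setOf_eq] using this
    have hS : {x | φ ∈ g x} ∈ ⋃ c ∈ b, f c :=
      hfab (Set.mem_iUnion₂.2 ⟨c, hc, hφc, hScl⟩)
    obtain ⟨y, hy, hyS, -⟩ := by simpa only [Set.mem_iUnion] using hS
    exact ⟨y, hy, hyS⟩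
  obtain ⟨A, h, hhp, hhn⟩ := hsat
  refine ⟨Set C, f, ⟨hpos, ?_⟩, fun a b => ⟨hcomp a b, fun H => H _ f hpos⟩⟩
  intro r hr hfr
  exact hhn r hr (hcomp r.1 r.2 hfr A h hhp)
end

section
/- Let f : C → Set A and g : C → Set B be atomized models over the same constants C, and suppose g satisfies every pinning relation of f (i.e., for every atom φ of f and every constant c with φ ∈ f c, g does not satisfy {c} ≤ T_φ). Then for all terms a, b over C: if g satisfies a ≤ b, then f satisfies a ≤ b. Equivalently, every negative relation ¬(a ≤ b) satisfied by f is also satisfied by g; thus g is as free as or freer than f, and the pinning relations of f capture all negative order relations of f. -/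
/-- The pinning term of an atom `φ` of the model `f`: the constants not containing `φ`. -/
def pinningTerm {C A : Type*} (f : C → Set A) (φ : A) : Set C := {d | φ ∉ f d}

/-- If `g` satisfies every pinning relation of `f`, then every positive
relation satisfied by `g` is satisfied by `f`; equivalently, `g` is as free as or freer
than `f`, i.e. the pinning relations of `f` capture all its negative order relations. -/
theorem pinning_relations_freer {C A B : Type*} (f : C → Set A) (g : C → Set B)
    (hpin : ∀ (φ : A) (c : C), φ ∈ f c → ¬ Sat g {c} (pinningTerm f φ)) :
    ∀ a b : Set C, Sat g a b → Sat f a b := by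
  intro a b hg φ hφ
  simp only [atomSet, Set.mem_iUnion] at hφ ⊢
  obtain ⟨c, hca, hφc⟩ := hφ
  by_contra h
  push_neg at h
  apply hpin φ c hφc
  intro x hx
  simp only [atomSet, Set.mem_iUnion] at hx ⊢
  obtain ⟨d, hd, hxd⟩ := hx
  rcases hd with rfl
  have : (atomSet g a : Set B) ⊆ atomSet g b := hg
  have hxb : x ∈ atomSet g b := this (by
    simp only [atomSet, Set.mem_iUnion]; exact ⟨d, hca, hxd⟩)
  simp only [atomSet, Set.mem_iUnion] at hxb
  obtain ⟨e, heb, hxe⟩ := hxb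
  exact ⟨e, h e heb, hxe⟩
end

section
/- Let f : C → Set A and g : C → Set B be atomized models over the same constants C, and suppose g satisfies every pinning relation of f (i.e., for every atom φ of f and every constant c with φ ∈ f c, g does not satisfy {c} ≤ T_φ). Then for every atom φ of f there exists an atom η of g such that φ is as large or larger than η: for every constant d, if η ∈ g d then φ ∈ f d. -/
/-- If `g` satisfies every pinning relation of `f`, then for every atom
`φ` of `f` there is an atom `η` of `g` such that `φ` is as large or larger than `η`:
every constant containing `η` (in `g`) contains `φ` (in `f`). -/
theorem pinning_relations_atom_domination {C A B : Type*} (f : C → Set A) (g : C → Set B)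
    (hpin : ∀ (φ : A) (c : C), φ ∈ f c → ¬ Sat g {c} (pinningTerm f φ)) :
    ∀ φ : A, (∃ c, φ ∈ f c) →
      ∃ η : B, (∃ c, η ∈ g c) ∧ ∀ d : C, η ∈ g d → φ ∈ f d := by
  rintro φ ⟨c, hc⟩
  have h := hpin φ c hc
  rw [Sat, Set.not_subset] at h
  obtain ⟨η, hη1, hη2⟩ := h
  have hηc : η ∈ g c := by
    simpa [atomSet] using hη1
  refine ⟨η, ⟨c, hηc⟩, fun d hd => ?_⟩
  by_contra hφ
  exact hη2 (Set.mem_biUnion (show d ∈ pinningTerm f φ from hφ) hd)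
end

section
/- Let f : C → Set A be an atomized model and φ ∈ A an atom. Call φ redundant in f if for every constant c with φ ∈ f c there exists an atom η ∈ f c with η ≠ φ such that φ is larger than η (for every constant d, η ∈ f d implies φ ∈ f d). Let f' be the model obtained by eliminating φ, i.e. f' c = f c \ {φ} for every constant c. Then f' satisfies exactly the same positive relations between terms as f (for all terms s, t over C, f' satisfies s ≤ t iff f satisfies s ≤ t) if and only if φ is redundant in f. (An atom can be eliminated without altering the model if and only if it is redundant.) -/
/-- An atom `φ` can be eliminated from an atomized model `f` without
altering the positive relations between terms if and only if `φ` is redundant: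
for every constant `c` containing `φ` there is another atom `η ∈ f c`, `η ≠ φ`, with
`φ` larger than `η`. -/
theorem eliminate_atom_iff_redundant {C A : Type*} (f : C → Set A) (φ : A)
    (f' : C → Set A) (hf' : ∀ c, f' c = f c \ {φ}) :
    (∀ s t : Set C, Sat f' s t ↔ Sat f s t) ↔
      (∀ c : C, φ ∈ f c → ∃ η ∈ f c, η ≠ φ ∧ ∀ d : C, η ∈ f d → φ ∈ f d) := by
  have hmem : ∀ (t : Set C) (x : A), x ∈ atomSet f t ↔ ∃ c ∈ t, x ∈ f c := by
    intro t x; simp [atomSet]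
  have hmem' : ∀ (t : Set C) (x : A), x ∈ atomSet f' t ↔ ∃ c ∈ t, x ∈ f c ∧ x ≠ φ := by
    intro t x
    simp only [atomSet, Set.mem_iUnion, hf', Set.mem_diff, Set.mem_singleton_iff]
    tauto
  constructor
  · intro h c hc
    by_contra hns
    push_neg at hns
    set t : Set C := {d | φ ∉ f d} with ht
    have hsat' : Sat f' {c} t := by
      intro x hx
      rw [hmem'] at hx
      obtain ⟨e, he, hxe, hxφ⟩ := hx
      rw [Set.mem_singleton_iff] at he
      subst he
      obtain ⟨d, hxd, hφd⟩ := hns x hxe hxφ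
      rw [hmem']
      exact ⟨d, hφd, hxd, hxφ⟩
    have hsat : Sat f {c} t := (h _ _).mp hsat'
    have : φ ∈ atomSet f t := hsat ((hmem _ _).mpr ⟨c, rfl, hc⟩)
    rw [hmem] at this
    obtain ⟨d, hd, hφd⟩ := this
    exact hd hφd
  · intro hred s t
    constructor
    · intro h x hx
      rw [hmem] at hx
      obtain ⟨c, hcs, hxc⟩ := hx
      by_cases hxφ : x = φ
      · subst hxφ
        obtain ⟨η, hηc, hηφ, hηle⟩ := hred c hxc
        have : η ∈ atomSet f' t := h ((hmem' _ _).mpr ⟨c, hcs, hηc, hηφ⟩)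
        rw [hmem'] at this
        obtain ⟨d, hdt, hηd, _⟩ := this
        exact (hmem _ _).mpr ⟨d, hdt, hηle d hηd⟩
      · have : x ∈ atomSet f' t := h ((hmem' _ _).mpr ⟨c, hcs, hxc, hxφ⟩)
        rw [hmem'] at this
        obtain ⟨d, hdt, hxd, _⟩ := this
        exact (hmem _ _).mpr ⟨d, hdt, hxd⟩
    · intro h x hx
      rw [hmem'] at hx
      obtain ⟨c, hcs, hxc, hxφ⟩ := hx
      have : x ∈ atomSet f t := h ((hmem _ _).mpr ⟨c, hcs, hxc⟩)
      rw [hmem] at this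
      obtain ⟨d, hdt, hxd⟩ := this
      exact (hmem' _ _).mpr ⟨d, hdt, hxd, hxφ⟩
end

section
/- Let f : C → Set A be an atomized model, let d and e be terms over C, and let f' be the full crossing of d into e. Then: (a) f' satisfies d ≤ e; and (b) for all terms s, t over C, if f satisfies s ≤ t then f' satisfies s ≤ t. In particular every negative relation satisfied by f' is satisfied by f, and if f does not satisfy d ≤ e then f' is strictly less free than f (it satisfies a positive relation, namely d ≤ e, that f does not). -/
/-- The full crossing of the term `d` into the term `e` in the atomized model `f`.
With `D`, `E` the atom sets of `d`, `e` and `Φ = D \ E`: atom `Sum.inl x` belongs to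
`f' c` iff `x ∈ f c` and `x ∉ Φ`; atom `Sum.inr (φ, ε)` belongs to `f' c` iff `φ ∈ Φ`,
`ε ∈ E` and (`φ ∈ f c` or `ε ∈ f c`). -/
def fullCross {C A : Type*} (f : C → Set A) (d e : Set C) : C → Set (A ⊕ A × A) :=
  fun c => {z | Sum.elim
    (fun x => x ∈ f c ∧ x ∉ atomSet f d \ atomSet f e)
    (fun p : A × A =>
      p.1 ∈ atomSet f d \ atomSet f e ∧ p.2 ∈ atomSet f e ∧ (p.1 ∈ f c ∨ p.2 ∈ f c)) z}

lemma mem_atomSet {C A : Type*} (f : C → Set A) (t : Set C) (x : A) :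
    x ∈ atomSet f t ↔ ∃ c ∈ t, x ∈ f c := by
  simp [atomSet]

/-- The full crossing of `d` into `e` (a) enforces `d ≤ e`, and
(b) preserves every positive relation between terms satisfied by `f`. -/
theorem fullCross_enforces_and_preserves {C A : Type*} (f : C → Set A) (d e : Set C) :
    Sat (fullCross f d e) d e ∧
    (∀ s t : Set C, Sat f s t → Sat (fullCross f d e) s t) := by
  constructor
  · intro z hz
    rw [mem_atomSet] at hz ⊢
    obtain ⟨c, hc, hzc⟩ := hz
    cases z with
    | inl x =>
      obtain ⟨hx, hnx⟩ := hzc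
      have hxd : x ∈ atomSet f d := (mem_atomSet f d x).2 ⟨c, hc, hx⟩
      have hxe : x ∈ atomSet f e := by
        by_contra h; exact hnx ⟨hxd, h⟩
      obtain ⟨c', hc', hx'⟩ := (mem_atomSet f e x).1 hxe
      exact ⟨c', hc', hx', fun h => h.2 hxe⟩
    | inr p =>
      obtain ⟨hp1, hp2, _⟩ := hzc
      obtain ⟨c', hc', hx'⟩ := (mem_atomSet f e p.2).1 hp2
      exact ⟨c', hc', hp1, hp2, Or.inr hx'⟩
  · intro s t hst z hz
    rw [mem_atomSet] at hz ⊢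
    obtain ⟨c, hc, hzc⟩ := hz
    cases z with
    | inl x =>
      obtain ⟨hx, hnx⟩ := hzc
      have : x ∈ atomSet f t := hst ((mem_atomSet f s x).2 ⟨c, hc, hx⟩)
      obtain ⟨c', hc', hx'⟩ := (mem_atomSet f t x).1 this
      exact ⟨c', hc', hx', hnx⟩
    | inr p =>
      obtain ⟨hp1, hp2, hor⟩ := hzc
      rcases hor with h | h
      · have : p.1 ∈ atomSet f t := hst ((mem_atomSet f s p.1).2 ⟨c, hc, h⟩)
        obtain ⟨c', hc', hx'⟩ := (mem_atomSet f t p.1).1 this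
        exact ⟨c', hc', hp1, hp2, Or.inl hx'⟩
      · have : p.2 ∈ atomSet f t := hst ((mem_atomSet f s p.2).2 ⟨c, hc, h⟩)
        obtain ⟨c', hc', hx'⟩ := (mem_atomSet f t p.2).1 this
        exact ⟨c', hc', hp1, hp2, Or.inr hx'⟩
end

section
/- Let g : C → Set Ξ be an atomized model, thought of as the dual algebra assigning to the dual [c] of each constant c its set of dual atoms, and define the master model f : C → Set Ξ by f c = {ξ : ξ ∉ g c}. Then for all terms a, b over C: f satisfies a ≤ b (i.e., ⋃_{c ∈ a} f c ⊆ ⋃_{c ∈ b} f c) if and only if ⋂_{c ∈ b} g c ⊆ ⋂_{c ∈ a} g c (i.e., the dual satisfies [b] ≤ [a], where the dual atom set of a term is the intersection of the dual atom sets of its component constants). In particular, f satisfies a negative relation ¬(a ≤ b) if and only if the dual satisfies ¬([b] ≤ [a]): the master atomization built from the dual satisfies exactly the reversed positive and negative relations of the dual. -/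
/-- Let `g` be the dual algebra assigning dual atom sets to (duals of)
constants and let the master model be `f c = {ξ | ξ ∉ g c}`. Then `f` satisfies `a ≤ b`
iff the dual satisfies `[b] ≤ [a]` (intersections of dual atom sets), and likewise for
negative relations: the master satisfies exactly the reversed relations of the dual. -/
theorem master_dual_reversal {C Ξ : Type*} (g : C → Set Ξ) (f : C → Set Ξ)
    (hf : ∀ c, f c = {ξ | ξ ∉ g c}) :
    ∀ a b : Set C,
      (Sat f a b ↔ (⋂ c ∈ b, g c) ⊆ ⋂ c ∈ a, g c) ∧
      (¬ Sat f a b ↔ ¬ ((⋂ c ∈ b, g c) ⊆ ⋂ c ∈ a, g c)) := by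
  have key : ∀ t : Set C, atomSet f t = (⋂ c ∈ t, g c)ᶜ := by
    intro t
    simp only [atomSet, Set.compl_iInter]
    refine Set.iUnion_congr fun c => Set.iUnion_congr fun _ => ?_
    rw [hf]; rfl
  intro a b
  have h : Sat f a b ↔ (⋂ c ∈ b, g c) ⊆ ⋂ c ∈ a, g c := by
    rw [Sat, key, key, Set.compl_subset_compl]
  exact ⟨h, not_congr h⟩
end
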